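/- Let M : ℤ × ℤ → ℤ × ℤ be the ℤ-linear map M(m,n) = (5m+n, 4m+n), let w ∈ ℤ × ℤ, and let Φ : ℤ × ℤ → ℤ × ℤ be the affine map Φ(v) = M(v) - w. If the forward orbit {Φ^j(0,0) : j ∈ ℕ} of the origin under Φ is a finite set, then w = (0,0). -/

import Mathlib

/-- Let `M(m,n) = (5m+n, 4m+n)` and let `Φ(v) = M(v) - w` for a fixed `w ∈ ℤ × ℤ`.
If the forward orbit of the origin under `Φ` is finite, then `w = (0, 0)`. -/
theorem stmt2 (w : ℤ × ℤ)
    (h : (Set.range fun j : ℕ =>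
      (fun v : ℤ × ℤ => (5 * v.1 + v.2, 4 * v.1 + v.2) - w)^[j] ((0 : ℤ), (0 : ℤ))).Finite) :
    w = ((0 : ℤ), (0 : ℤ)) := by
  set Φ : ℤ × ℤ → ℤ × ℤ := fun v => (5 * v.1 + v.2, 4 * v.1 + v.2) - w with hΦ
  have h2 : Real.sqrt 2 * Real.sqrt 2 = 2 := Real.mul_self_sqrt (by norm_num)
  have hs2pos : (0:ℝ) < Real.sqrt 2 := Real.sqrt_pos.2 (by norm_num)
  set r : ℝ := 3 + 2 * Real.sqrt 2 with hr
  have hr1 : (1:ℝ) < r := by rw [hr]; nlinarith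
  set f : ℤ × ℤ → ℝ := fun v => (2 + 2 * Real.sqrt 2) * v.1 + v.2 with hf
  have key : ∀ v : ℤ × ℤ, f (Φ v) = r * f v - f w := by
    intro v
    simp only [hf, hΦ, hr, Prod.fst_sub, Prod.snd_sub]
    push_cast
    linear_combination (-4 * (v.1 : ℝ)) * h2
  set c : ℝ := f w / (r - 1) with hc
  have hrne : r - 1 ≠ 0 := by linarith
  have hrc' : (r - 1) * c = f w := by
    rw [hc, mul_comm, div_mul_cancel₀ _ hrne]
  have hrc : r * c - f w = c := by linear_combination hrc'
  have orbit : ∀ j : ℕ, f (Φ^[j] ((0:ℤ), (0:ℤ))) = c - r ^ j * c := by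
    intro j
    induction j with
    | zero => simp [hf]
    | succ n ih =>
        rw [Function.iterate_succ_apply', key, ih]
        rw [show r * (c - r ^ n * c) - f w = (r * c - f w) - r ^ (n+1) * c by ring, hrc]
  -- boundedness from finiteness
  have hfin : (Set.range fun j : ℕ => f (Φ^[j] ((0:ℤ), (0:ℤ)))).Finite := by
    have := h.image f
    rwa [← Set.range_comp] at this
  obtain ⟨B1, hB1⟩ := hfin.bddAbove
  obtain ⟨B2, hB2⟩ := hfin.bddBelow
  have hbound : ∀ j : ℕ, |f (Φ^[j] ((0:ℤ), (0:ℤ)))| ≤ max B1 (-B2) := by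
    intro j
    have h1 : f (Φ^[j] ((0:ℤ), (0:ℤ))) ≤ B1 := hB1 ⟨j, rfl⟩
    have h2' : B2 ≤ f (Φ^[j] ((0:ℤ), (0:ℤ))) := hB2 ⟨j, rfl⟩
    rw [abs_le]
    constructor
    · linarith [le_max_right B1 (-B2)]
    · linarith [le_max_left B1 (-B2)]
  set B := max B1 (-B2) with hB
  have hc0 : c = 0 := by
    by_contra hc0
    have habs : (0:ℝ) < |c| := abs_pos.2 hc0
    obtain ⟨j, hj⟩ := pow_unbounded_of_one_lt ((B + |c|) / |c|) hr1
    have hj' : B + |c| < r ^ j * |c| := by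
      rw [div_lt_iff₀ habs] at hj
      linarith
    have := hbound j
    rw [orbit j] at this
    have h3 : r ^ j * |c| - |c| ≤ |c - r ^ j * c| := by
      have := abs_sub_abs_le_abs_sub (r ^ j * c) c
      rw [abs_mul, abs_pow, abs_of_pos (by linarith : (0:ℝ) < r)] at this
      calc r ^ j * |c| - |c| ≤ |r ^ j * c - c| := this
        _ = |c - r ^ j * c| := abs_sub_comm _ _
    linarith
  have hfw : f w = 0 := by
    have := hc
    rw [hc0] at this
    field_simp at this
    simpa using this.symm
  -- from f w = 0 deduce w = 0 using irrationality of sqrt 2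
  have hfw' : (2 + 2 * Real.sqrt 2) * (w.1 : ℝ) + (w.2 : ℝ) = 0 := hfw
  have hw1 : w.1 = 0 := by
    by_contra hw1
    have hw1R : (w.1 : ℝ) ≠ 0 := Int.cast_ne_zero.2 hw1
    have hq : Real.sqrt 2 = ((-(2 * w.1 + w.2) : ℤ) : ℝ) / ((2 * w.1 : ℤ) : ℝ) := by
      push_cast
      field_simp
      linarith
    have : ¬ Irrational (((((-(2 * w.1 + w.2) : ℤ) : ℚ) / ((2 * w.1 : ℤ) : ℚ)) : ℚ) : ℝ) :=
      Rat.not_irrational _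
    apply this
    have hcast : ((((((-(2 * w.1 + w.2) : ℤ) : ℚ) / ((2 * w.1 : ℤ) : ℚ)) : ℚ) : ℝ)) =
        ((-(2 * w.1 + w.2) : ℤ) : ℝ) / ((2 * w.1 : ℤ) : ℝ) := by push_cast; ring
    rw [hcast, ← hq]
    exact irrational_sqrt_two
  have hw2 : w.2 = 0 := by
    have : (w.2 : ℝ) = 0 := by
      rw [hw1] at hfw'
      push_cast at hfw'
      linarith
    exact_mod_cast this
  exact Prod.ext hw1 hw2
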